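/- arXiv:1411.7315 — 3 statements merged into one kernel-verified Lean document; each statement's English description precedes it below -/
import Mathlib

section
/- For every string s over Σ: d_G(G,s) = 0 if and only if there exists a derivation of s from S in the augmented grammar G_e of score 0; and d_G(G,s) = 1 if and only if there exists a derivation of s from S in G_e of score 1 and no derivation of s from S in G_e of score 0. -/
/-- A scored production of a grammar: a left-hand-side nonterminal, a right-hand-side
string of nonterminals and terminals, and a score (edit cost). -/
structure ScoredProd (N : Type*) (T : Type*) where
  lhs : N
  rhs : List (N ⊕ T)
  score : ℕ

/-- `ScoredDerives P u v c` : from the sentential form `u` one can derive the sentential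
form `v` using productions from `P` whose scores sum to `c`. -/
inductive ScoredDerives {N T : Type*} (P : Set (ScoredProd N T)) :
    List (N ⊕ T) → List (N ⊕ T) → ℕ → Prop
  | refl (w : List (N ⊕ T)) : ScoredDerives P w w 0
  | step {u l r : List (N ⊕ T)} {p : ScoredProd N T} {c : ℕ} :
      ScoredDerives P u (l ++ [Sum.inl p.lhs] ++ r) c → p ∈ P →
      ScoredDerives P u (l ++ p.rhs ++ r) (c + p.score)

/-- A context-free grammar in Chomsky normal form: binary rules `A → BC`,
terminal rules `A → a`, and possibly the rule `S → ε` (recorded by `eps`). -/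
structure CNF (N : Type*) (T : Type*) where
  start : N
  bin : Set (N × N × N)
  term : Set (N × T)
  eps : Prop

/-- The productions of the CNF grammar `G`, all of score `0`. -/
def CNF.prods {N T : Type*} (G : CNF N T) : Set (ScoredProd N T) :=
  {p | (∃ A B C, (A, B, C) ∈ G.bin ∧ p = ⟨A, [Sum.inl B, Sum.inl C], 0⟩) ∨
       (∃ A a, (A, a) ∈ G.term ∧ p = ⟨A, [Sum.inr a], 0⟩) ∨
       (G.eps ∧ p = ⟨G.start, [], 0⟩)}

/-- Lift a production of `G` to the augmented grammar `G_e`, whose nonterminals are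
`N ⊕ Unit` (with `Sum.inr ()` playing the role of the fresh nonterminal `I`). -/
def liftProd {N T : Type*} (p : ScoredProd N T) : ScoredProd (N ⊕ Unit) T :=
  ⟨Sum.inl p.lhs, p.rhs.map (Sum.map Sum.inl id), p.score⟩

/-- The productions of the augmented grammar `G_e`: the original productions of `G`
(score 0), elementary substitution rules `A → y` of score 1 (for `A` having some
terminal rule and `y` with `A → y ∉ P`), elementary insertion rules `I → x` of score 1,
rules `A → IA`, `A → AI` of score 0, `I → II` of score 0, and elementary deletion rules
`A → ε` of score 1 for every terminal rule `A → x` of `G`. -/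
def CNF.augProds {N T : Type*} (G : CNF N T) : Set (ScoredProd (N ⊕ Unit) T) :=
  (liftProd '' G.prods) ∪
  {p | ∃ A y, (∃ x, (A, x) ∈ G.term) ∧ (A, y) ∉ G.term ∧
        p = ⟨Sum.inl A, [Sum.inr y], 1⟩} ∪
  {p | ∃ x, p = ⟨Sum.inr (), [Sum.inr x], 1⟩} ∪
  {p | ∃ A : N, p = ⟨Sum.inl A, [Sum.inl (Sum.inr ()), Sum.inl (Sum.inl A)], 0⟩ ∨
                p = ⟨Sum.inl A, [Sum.inl (Sum.inl A), Sum.inl (Sum.inr ())], 0⟩} ∪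
  {(⟨Sum.inr (), [Sum.inl (Sum.inr ()), Sum.inl (Sum.inr ())], 0⟩ : ScoredProd (N ⊕ Unit) T)} ∪
  {p | ∃ A x, (A, x) ∈ G.term ∧ p = ⟨Sum.inl A, [], 1⟩}

/-- `A ⇒* s` in the grammar `G`. -/
def CNF.Derives {N T : Type*} (G : CNF N T) (A : N) (s : List T) : Prop :=
  ∃ u, ScoredDerives G.prods [Sum.inl A] (s.map Sum.inr) u

/-- The language of `G`. -/
def CNF.lang {N T : Type*} (G : CNF N T) : Set (List T) := {s | G.Derives G.start s}

/-- `A ⇒* s` in the augmented grammar `G_e` with a derivation of score exactly `u`. -/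
def CNF.augDerives {N T : Type*} (G : CNF N T) (A : N ⊕ Unit) (s : List T) (u : ℕ) : Prop :=
  ScoredDerives G.augProds [Sum.inl A] (s.map Sum.inr) u

/-- Costs for the Levenshtein distance (formerly `Levenshtein.Cost` in Mathlib). -/
structure Levenshtein.Cost (α β δ : Type*) where
  delete : α → δ
  insert : β → δ
  substitute : α → β → δ

/-- Unit costs (formerly `Levenshtein.defaultCost` in Mathlib). -/
def Levenshtein.defaultCost {α : Type*} [DecidableEq α] : Levenshtein.Cost α α ℕ where
  delete _ := 1
  insert _ := 1
  substitute a b := if a = b then 0 else 1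

/-- The Levenshtein distance (formerly `levenshtein` in Mathlib), by its defining recursion. -/
def levenshtein {α β δ : Type*} [AddZeroClass δ] [Min δ] (C : Levenshtein.Cost α β δ) :
    List α → List β → δ
  | [], [] => 0
  | [], y :: ys => C.insert y + levenshtein C [] ys
  | x :: xs, [] => C.delete x + levenshtein C xs []
  | x :: xs, y :: ys =>
      min (C.delete x + levenshtein C xs (y :: ys))
        (min (C.insert y + levenshtein C (x :: xs) ys) (C.substitute x y + levenshtein C xs ys))

/-- The standard (unit-cost) string edit distance. -/
def editDist {T : Type*} [DecidableEq T] (s t : List T) : ℕ :=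
  levenshtein Levenshtein.defaultCost s t

/-- The language edit distance `d_G(G,s) = min_{z ∈ L(G)} d_ed(s,z)`. -/
noncomputable def dG {N T : Type*} [DecidableEq T] (G : CNF N T) (s : List T) : ℕ :=
  sInf {d | ∃ z ∈ G.lang, editDist s z = d}

section Aux

open ScoredDerives

variable {N T : Type*}

/-! ### Basic lemmas about `ScoredDerives` -/

theorem ScoredDerives.cast {P : Set (ScoredProd N T)} {u v : List (N ⊕ T)} {c c' : ℕ}
    (h : ScoredDerives P u v c) (e : c = c') : ScoredDerives P u v c' := e ▸ h

theorem ScoredDerives.trans {P : Set (ScoredProd N T)} {u v w : List (N ⊕ T)} {c1 c2 : ℕ}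
    (h1 : ScoredDerives P u v c1) (h2 : ScoredDerives P v w c2) :
    ScoredDerives P u w (c1 + c2) := by
  induction h2 with
  | refl => exact h1
  | step h hp ih => exact (ih.step hp).cast (by omega)

theorem ScoredDerives.appendRight {P : Set (ScoredProd N T)} {u v : List (N ⊕ T)} {c : ℕ}
    (h : ScoredDerives P u v c) (w : List (N ⊕ T)) :
    ScoredDerives P (u ++ w) (v ++ w) c := by
  induction h with
  | refl => exact .refl _
  | @step l r p c h hp ih =>
      have := ScoredDerives.step (p := p) (l := l) (r := r ++ w)
        (by simpa using ih) hp
      simpa using this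

theorem ScoredDerives.appendLeft {P : Set (ScoredProd N T)} {u v : List (N ⊕ T)} {c : ℕ}
    (h : ScoredDerives P u v c) (w : List (N ⊕ T)) :
    ScoredDerives P (w ++ u) (w ++ v) c := by
  induction h with
  | refl => exact .refl _
  | @step l r p c h hp ih =>
      have := ScoredDerives.step (p := p) (l := w ++ l) (r := r)
        (by simpa using ih) hp
      simpa using this

theorem ScoredDerives.append {P : Set (ScoredProd N T)} {u1 v1 u2 v2 : List (N ⊕ T)}
    {c1 c2 : ℕ} (h1 : ScoredDerives P u1 v1 c1) (h2 : ScoredDerives P u2 v2 c2) :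
    ScoredDerives P (u1 ++ u2) (v1 ++ v2) (c1 + c2) :=
  (h1.appendRight u2).trans (h2.appendLeft v1)

theorem ScoredDerives.head {P : Set (ScoredProd N T)} {p : ScoredProd N T} (hp : p ∈ P) :
    ScoredDerives P [Sum.inl p.lhs] p.rhs p.score := by
  have := ScoredDerives.step (p := p) (l := []) (r := []) (.refl [Sum.inl p.lhs]) hp
  simpa using this

/-! ### Scores in `G.prods` are zero -/

theorem CNF.prods_score_zero {G : CNF N T} {p : ScoredProd N T} (hp : p ∈ G.prods) :
    p.score = 0 := by
  rcases hp with ⟨A, B, C, _, rfl⟩ | ⟨A, a, _, rfl⟩ | ⟨_, rfl⟩ <;> rfl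

theorem CNF.derives_score_zero {G : CNF N T} {u v : List (N ⊕ T)} {c : ℕ}
    (h : ScoredDerives G.prods u v c) : c = 0 := by
  induction h with
  | refl => rfl
  | @step l r p c h hp ih => rw [G.prods_score_zero hp]; omega

/-! ### Lifting derivations of `G` into `G_e` -/

/-- The lift of a symbol of `G` to a symbol of `G_e`. -/
abbrev liftSym : (N ⊕ T) → ((N ⊕ Unit) ⊕ T) := Sum.map Sum.inl id

theorem CNF.liftDerives {G : CNF N T} {u v : List (N ⊕ T)} {c : ℕ}
    (h : ScoredDerives G.prods u v c) :
    ScoredDerives G.augProds (u.map liftSym) (v.map liftSym) c := by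
  induction h with
  | refl => exact .refl _
  | @step l r p c h hp ih =>
      have hmem : liftProd p ∈ G.augProds :=
        Or.inl <| Or.inl <| Or.inl <| Or.inl <| Or.inl <| ⟨p, hp, rfl⟩
      have := ScoredDerives.step (p := liftProd p) (l := l.map liftSym) (r := r.map liftSym)
        (by simpa [liftProd] using ih) hmem
      simpa [liftProd] using this

/-! ### Membership lemmas for `G.augProds` -/

theorem CNF.mem_aug_sub {G : CNF N T} {A : N} {y : T} (hx : ∃ x, (A, x) ∈ G.term)
    (hy : (A, y) ∉ G.term) :
    (⟨Sum.inl A, [Sum.inr y], 1⟩ : ScoredProd (N ⊕ Unit) T) ∈ G.augProds :=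
  Or.inl <| Or.inl <| Or.inl <| Or.inl <| Or.inr <| ⟨A, y, hx, hy, rfl⟩

theorem CNF.mem_aug_ins {G : CNF N T} (x : T) :
    (⟨Sum.inr (), [Sum.inr x], 1⟩ : ScoredProd (N ⊕ Unit) T) ∈ G.augProds :=
  Or.inl <| Or.inl <| Or.inl <| Or.inr <| ⟨x, rfl⟩

theorem CNF.mem_aug_IA {G : CNF N T} (A : N) :
    (⟨Sum.inl A, [Sum.inl (Sum.inr ()), Sum.inl (Sum.inl A)], 0⟩ : ScoredProd (N ⊕ Unit) T)
      ∈ G.augProds :=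
  Or.inl <| Or.inl <| Or.inr <| ⟨A, Or.inl rfl⟩

theorem CNF.mem_aug_AI {G : CNF N T} (A : N) :
    (⟨Sum.inl A, [Sum.inl (Sum.inl A), Sum.inl (Sum.inr ())], 0⟩ : ScoredProd (N ⊕ Unit) T)
      ∈ G.augProds :=
  Or.inl <| Or.inl <| Or.inr <| ⟨A, Or.inr rfl⟩

theorem CNF.mem_aug_del {G : CNF N T} {A : N} {x : T} (hx : (A, x) ∈ G.term) :
    (⟨Sum.inl A, [], 1⟩ : ScoredProd (N ⊕ Unit) T) ∈ G.augProds :=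
  Or.inr <| ⟨A, x, hx, rfl⟩

theorem CNF.mem_prods_term {G : CNF N T} {A : N} {x : T} (hx : (A, x) ∈ G.term) :
    (⟨A, [Sum.inr x], 0⟩ : ScoredProd N T) ∈ G.prods :=
  Or.inr <| Or.inl <| ⟨A, x, hx, rfl⟩

/-! ### A trichotomy for occurrences in concatenations -/

theorem triSplit {γ : Type*} {l m r α β : List γ} {x : γ} (h : l ++ m ++ r = α ++ x :: β) :
    (∃ t, l = α ++ x :: t ∧ β = t ++ m ++ r) ∨
    (∃ m1 m2, m = m1 ++ x :: m2 ∧ α = l ++ m1 ∧ β = m2 ++ r) ∨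
    (∃ t, r = t ++ x :: β ∧ α = l ++ m ++ t) := by
  rw [List.append_assoc] at h
  rcases List.append_eq_append_iff.mp h with ⟨a', ha1, ha2⟩ | ⟨c', hc1, hc2⟩
  · rcases List.append_eq_append_iff.mp ha2 with ⟨a2, hb1, hb2⟩ | ⟨c2, hd1, hd2⟩
    · exact Or.inr <| Or.inr ⟨a2, hb2, by simp [ha1, hb1]⟩
    · cases c2 with
      | nil =>
          exact Or.inr <| Or.inr ⟨[], by simpa using hd2.symm, by simp [ha1, hd1]⟩
      | cons y m2 =>
          obtain ⟨rfl, rfl⟩ : x = y ∧ β = m2 ++ r := by simpa using hd2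
          exact Or.inr <| Or.inl ⟨a', m2, hd1, ha1, rfl⟩
  · cases c' with
    | nil =>
        simp only [List.append_nil] at hc1
        cases m with
        | nil =>
            exact Or.inr <| Or.inr ⟨[], by simpa using hc2.symm, by simp [hc1]⟩
        | cons y m2 =>
            obtain ⟨rfl, rfl⟩ : y = x ∧ m2 ++ r = β := by simpa using hc2.symm
            exact Or.inr <| Or.inl ⟨[], m2, rfl, by simp [hc1], rfl⟩
    | cons y t =>
        obtain ⟨rfl, rfl⟩ : x = y ∧ β = t ++ (m ++ r) := by simpa using hc2
        exact Or.inl ⟨t, hc1, by simp⟩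

/-! ### Factoring a terminal occurrence out of a derivation in `G` -/

theorem CNF.factor {G : CNF N T} {u v : List (N ⊕ T)} {c : ℕ}
    (h : ScoredDerives G.prods u v c) :
    ∀ {α β : List (N ⊕ T)} {x : T}, v = α ++ Sum.inr x :: β →
    (∃ u1 u2, u = u1 ++ Sum.inr x :: u2 ∧ ScoredDerives G.prods u1 α 0 ∧
        ScoredDerives G.prods u2 β 0) ∨
    (∃ w1 A w2, ScoredDerives G.prods u (w1 ++ [Sum.inl A] ++ w2) 0 ∧ (A, x) ∈ G.term ∧
        ScoredDerives G.prods w1 α 0 ∧ ScoredDerives G.prods w2 β 0) := by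
  induction h with
  | refl =>
      rintro α β x rfl
      exact Or.inl ⟨α, β, rfl, .refl _, .refl _⟩
  | @step l r p c h hp ih =>
      rintro α β x hv
      rcases triSplit hv with ⟨t, hl, hβ⟩ | ⟨m1, m2, hm, hα, hβ⟩ | ⟨t, hr, hα⟩
      · -- occurrence inside `l`
        subst hl
        have h' : ScoredDerives G.prods u ((α ++ Sum.inr x :: t) ++ [Sum.inl p.lhs] ++ r) c := h
        rcases ih (α := α) (β := t ++ [Sum.inl p.lhs] ++ r) (x := x) (by simp) with ⟨u1, u2, hu, h1, h2⟩ | ⟨w1, A, w2, hw, hA, h1, h2⟩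
        · refine Or.inl ⟨u1, u2, hu, h1, ?_⟩
          subst hβ
          have := ScoredDerives.step (l := t) (r := r) (by simpa using h2) hp
          rw [G.prods_score_zero hp] at this
          simpa using this
        · refine Or.inr ⟨w1, A, w2, hw, hA, h1, ?_⟩
          subst hβ
          have := ScoredDerives.step (l := t) (r := r) (by simpa using h2) hp
          rw [G.prods_score_zero hp] at this
          simpa using this
      · -- occurrence inside `p.rhs`
        obtain ⟨A', B', C', _, rfl⟩ | ⟨A', a', ht, rfl⟩ | ⟨_, rfl⟩ := hp
        · exfalso
          have hmem : (Sum.inr x : N ⊕ T) ∈ m1 ++ Sum.inr x :: m2 := by simp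
          rw [← hm] at hmem
          simp at hmem
        · have hm' : [(Sum.inr a' : N ⊕ T)] = m1 ++ Sum.inr x :: m2 := hm
          have hlen := congrArg List.length hm'
          simp at hlen
          obtain rfl : m1 = [] := List.eq_nil_of_length_eq_zero (by omega)
          obtain rfl : m2 = [] := List.eq_nil_of_length_eq_zero (by omega)
          obtain rfl : a' = x := by simpa using hm'
          refine Or.inr ⟨l, A', r, h.cast (G.derives_score_zero h), ht, ?_, ?_⟩
          · rw [hα]; simpa using ScoredDerives.refl l
          · rw [hβ]; simpa using ScoredDerives.refl r
        · exfalso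
          have hm' : ([] : List (N ⊕ T)) = m1 ++ Sum.inr x :: m2 := hm
          simp at hm'
      · -- occurrence inside `r`
        subst hr
        have h' : ScoredDerives G.prods u (l ++ [Sum.inl p.lhs] ++ (t ++ Sum.inr x :: β)) c := by
          simpa using h
        rcases ih (α := l ++ [Sum.inl p.lhs] ++ t) (β := β) (x := x) (by simp)
          with ⟨u1, u2, hu, h1, h2⟩ | ⟨w1, A, w2, hw, hA, h1, h2⟩
        · refine Or.inl ⟨u1, u2, hu, ?_, h2⟩
          subst hα
          have := ScoredDerives.step (l := l) (r := t) (by simpa using h1) hp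
          rw [G.prods_score_zero hp] at this
          simpa using this
        · refine Or.inr ⟨w1, A, w2, hw, hA, ?_, h2⟩
          subst hα
          have := ScoredDerives.step (l := l) (r := t) (by simpa using h1) hp
          rw [G.prods_score_zero hp] at this
          simpa using this

/-! ### Alignments between sentential forms of `G_e` and of `G` -/

/-- An alignment between a sentential form of `G_e` and one of `G`, with its cost. -/
inductive Align [DecidableEq T] : List ((N ⊕ Unit) ⊕ T) → List (N ⊕ T) → ℕ → Prop
  | nil : Align [] [] 0
  | nt (A : N) {w v k} : Align w v k → Align (Sum.inl (Sum.inl A) :: w) (Sum.inl A :: v) k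
  | tt (a b : T) {w v k} : Align w v k →
      Align (Sum.inr a :: w) (Sum.inr b :: v) (k + if a = b then 0 else 1)
  | insI {w v k} : Align w v k → Align (Sum.inl (Sum.inr ()) :: w) v k
  | insT (a : T) {w v k} : Align w v k → Align (Sum.inr a :: w) v (k + 1)
  | delT (b : T) {w v k} : Align w v k → Align w (Sum.inr b :: v) (k + 1)

variable [DecidableEq T]

theorem Align.cast' {w : List ((N ⊕ Unit) ⊕ T)} {v : List (N ⊕ T)} {k k' : ℕ}
    (h : Align w v k) (e : k = k') : Align w v k' := e ▸ h

theorem Align.app {w1 w2 : List ((N ⊕ Unit) ⊕ T)} {v1 v2 : List (N ⊕ T)} {k1 k2 : ℕ}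
    (h1 : Align w1 v1 k1) (h2 : Align w2 v2 k2) :
    Align (w1 ++ w2) (v1 ++ v2) (k1 + k2) := by
  induction h1 with
  | nil => simpa using h2
  | nt A h ih => exact (ih.nt A).cast' (by omega)
  | tt a b h ih => exact ((ih.tt a b)).cast' (by omega)
  | insI h ih => exact ih.insI
  | insT a h ih => exact (ih.insT a).cast' (by omega)
  | delT b h ih => exact (ih.delT b).cast' (by omega)

theorem Align.splitNT {w : List ((N ⊕ Unit) ⊕ T)} {v : List (N ⊕ T)} {k : ℕ}
    (h : Align w v k) :
    ∀ {l r : List ((N ⊕ Unit) ⊕ T)} {A : N}, w = l ++ Sum.inl (Sum.inl A) :: r →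
    ∃ v1 v2 k1 k2, v = v1 ++ Sum.inl A :: v2 ∧ Align l v1 k1 ∧ Align r v2 k2 ∧ k = k1 + k2 := by
  induction h with
  | nil => intro l r A h; exact absurd h (by simp)
  | nt A' h ih =>
      rintro (_ | ⟨s, l⟩) r A he
      · obtain ⟨hA, rfl⟩ : Sum.inl (Sum.inl A') = (Sum.inl (Sum.inl A) : (N ⊕ Unit) ⊕ T) ∧ _ = r := by
          simpa using he
        obtain rfl : A' = A := by simpa using hA
        exact ⟨[], _, 0, _, rfl, .nil, h, by omega⟩
      · obtain ⟨rfl, he'⟩ : Sum.inl (Sum.inl A') = s ∧ _ = l ++ Sum.inl (Sum.inl A) :: r := by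
          simpa using he
        obtain ⟨v1, v2, k1, k2, rfl, h1, h2, rfl⟩ := ih he'
        exact ⟨Sum.inl A' :: v1, v2, k1, k2, rfl, h1.nt A', h2, rfl⟩
  | tt a b h ih =>
      rintro (_ | ⟨s, l⟩) r A he
      · simp at he
      · obtain ⟨rfl, he'⟩ : (Sum.inr a : (N ⊕ Unit) ⊕ T) = s ∧ _ = l ++ Sum.inl (Sum.inl A) :: r := by
          simpa using he
        obtain ⟨v1, v2, k1, k2, rfl, h1, h2, rfl⟩ := ih he'
        exact ⟨Sum.inr b :: v1, v2, _, k2, rfl, h1.tt a b, h2, by omega⟩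
  | insI h ih =>
      rintro (_ | ⟨s, l⟩) r A he
      · simp at he
      · obtain ⟨rfl, he'⟩ : (Sum.inl (Sum.inr ()) : (N ⊕ Unit) ⊕ T) = s ∧
            _ = l ++ Sum.inl (Sum.inl A) :: r := by simpa using he
        obtain ⟨v1, v2, k1, k2, rfl, h1, h2, rfl⟩ := ih he'
        exact ⟨v1, v2, k1, k2, rfl, h1.insI, h2, rfl⟩
  | insT a h ih =>
      rintro (_ | ⟨s, l⟩) r A he
      · simp at he
      · obtain ⟨rfl, he'⟩ : (Sum.inr a : (N ⊕ Unit) ⊕ T) = s ∧ _ = l ++ Sum.inl (Sum.inl A) :: r := by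
          simpa using he
        obtain ⟨v1, v2, k1, k2, rfl, h1, h2, rfl⟩ := ih he'
        exact ⟨v1, v2, _, k2, rfl, h1.insT a, h2, by omega⟩
  | delT b h ih =>
      intro l r A he
      obtain ⟨v1, v2, k1, k2, rfl, h1, h2, rfl⟩ := ih he
      exact ⟨Sum.inr b :: v1, v2, _, k2, rfl, h1.delT b, h2, by omega⟩

theorem Align.splitI {w : List ((N ⊕ Unit) ⊕ T)} {v : List (N ⊕ T)} {k : ℕ}
    (h : Align w v k) :
    ∀ {l r : List ((N ⊕ Unit) ⊕ T)}, w = l ++ Sum.inl (Sum.inr ()) :: r →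
    ∃ v1 v2 k1 k2, v = v1 ++ v2 ∧ Align l v1 k1 ∧ Align r v2 k2 ∧ k = k1 + k2 := by
  induction h with
  | nil => intro l r h; exact absurd h (by simp)
  | nt A' h ih =>
      rintro (_ | ⟨s, l⟩) r he
      · simp at he
      · obtain ⟨rfl, he'⟩ : Sum.inl (Sum.inl A') = s ∧ _ = l ++ Sum.inl (Sum.inr ()) :: r := by
          simpa using he
        obtain ⟨v1, v2, k1, k2, rfl, h1, h2, rfl⟩ := ih he'
        exact ⟨Sum.inl A' :: v1, v2, k1, k2, rfl, h1.nt A', h2, rfl⟩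
  | tt a b h ih =>
      rintro (_ | ⟨s, l⟩) r he
      · simp at he
      · obtain ⟨rfl, he'⟩ : (Sum.inr a : (N ⊕ Unit) ⊕ T) = s ∧ _ = l ++ Sum.inl (Sum.inr ()) :: r := by
          simpa using he
        obtain ⟨v1, v2, k1, k2, rfl, h1, h2, rfl⟩ := ih he'
        exact ⟨Sum.inr b :: v1, v2, _, k2, rfl, h1.tt a b, h2, by omega⟩
  | insI h ih =>
      rintro (_ | ⟨s, l⟩) r he
      · obtain rfl : _ = r := by simpa using he
        exact ⟨[], _, 0, _, rfl, .nil, h, by omega⟩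
      · obtain ⟨rfl, he'⟩ : (Sum.inl (Sum.inr ()) : (N ⊕ Unit) ⊕ T) = s ∧
            _ = l ++ Sum.inl (Sum.inr ()) :: r := by simpa using he
        obtain ⟨v1, v2, k1, k2, rfl, h1, h2, rfl⟩ := ih he'
        exact ⟨v1, v2, k1, k2, rfl, h1.insI, h2, rfl⟩
  | insT a h ih =>
      rintro (_ | ⟨s, l⟩) r he
      · simp at he
      · obtain ⟨rfl, he'⟩ : (Sum.inr a : (N ⊕ Unit) ⊕ T) = s ∧ _ = l ++ Sum.inl (Sum.inr ()) :: r := by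
          simpa using he
        obtain ⟨v1, v2, k1, k2, rfl, h1, h2, rfl⟩ := ih he'
        exact ⟨v1, v2, _, k2, rfl, h1.insT a, h2, by omega⟩
  | delT b h ih =>
      intro l r he
      obtain ⟨v1, v2, k1, k2, rfl, h1, h2, rfl⟩ := ih he
      exact ⟨Sum.inr b :: v1, v2, _, k2, rfl, h1.delT b, h2, by omega⟩

/-- The identity alignment between a `G`-sentential form and its lift, of cost `0`. -/
theorem align_lift : ∀ ρ : List (N ⊕ T), Align (ρ.map liftSym) ρ 0
  | [] => .nil
  | Sum.inl A :: ρ => (align_lift ρ).nt A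
  | Sum.inr a :: ρ => ((align_lift ρ).tt a a).cast' (by simp)

/-! ### Levenshtein distance helpers -/

@[simp] theorem Levenshtein.defaultCost_delete (a : T) :
    (Levenshtein.defaultCost : Levenshtein.Cost T T ℕ).delete a = 1 := rfl

@[simp] theorem Levenshtein.defaultCost_insert (a : T) :
    (Levenshtein.defaultCost : Levenshtein.Cost T T ℕ).insert a = 1 := rfl

@[simp] theorem Levenshtein.defaultCost_substitute (a b : T) :
    (Levenshtein.defaultCost : Levenshtein.Cost T T ℕ).substitute a b = if a = b then 0 else 1 := rfl

@[simp] theorem levenshtein_nil_nil (C : Levenshtein.Cost T T ℕ) :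
    levenshtein C [] [] = 0 := by rw [levenshtein]

@[simp] theorem levenshtein_nil_cons (C : Levenshtein.Cost T T ℕ) (y : T) (ys : List T) :
    levenshtein C [] (y :: ys) = C.insert y + levenshtein C [] ys := by rw [levenshtein]

@[simp] theorem levenshtein_cons_nil (C : Levenshtein.Cost T T ℕ) (x : T) (xs : List T) :
    levenshtein C (x :: xs) [] = C.delete x + levenshtein C xs [] := by rw [levenshtein]

theorem levenshtein_cons_cons (C : Levenshtein.Cost T T ℕ) (x y : T) (xs ys : List T) :
    levenshtein C (x :: xs) (y :: ys) =
      min (C.delete x + levenshtein C xs (y :: ys))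
        (min (C.insert y + levenshtein C (x :: xs) ys) (C.substitute x y + levenshtein C xs ys)) := by
  rw [levenshtein]

theorem lev_le_del (a : T) (s z : List T) :
    levenshtein Levenshtein.defaultCost (a :: s) z ≤ 1 + levenshtein Levenshtein.defaultCost s z := by
  cases z with
  | nil => simp
  | cons b z => rw [levenshtein_cons_cons]; exact min_le_left _ _ |>.trans (by simp)

theorem lev_le_ins (b : T) (s z : List T) :
    levenshtein Levenshtein.defaultCost s (b :: z) ≤ 1 + levenshtein Levenshtein.defaultCost s z := by
  cases s with
  | nil => simp
  | cons a s =>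
      rw [levenshtein_cons_cons]
      exact (min_le_right _ _).trans ((min_le_left _ _).trans (by simp))

theorem lev_le_sub (a b : T) (s z : List T) :
    levenshtein Levenshtein.defaultCost (a :: s) (b :: z) ≤
      (if a = b then 0 else 1) + levenshtein Levenshtein.defaultCost s z := by
  rw [levenshtein_cons_cons]
  exact (min_le_right _ _).trans ((min_le_right _ _).trans (by simp))

theorem lev_self (s : List T) : levenshtein Levenshtein.defaultCost s s = 0 := by
  induction s with
  | nil => simp
  | cons a s ih =>
      refine Nat.le_zero.mp ?_
      calc levenshtein Levenshtein.defaultCost (a :: s) (a :: s) ≤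
          (if a = a then 0 else 1) + levenshtein Levenshtein.defaultCost s s := lev_le_sub a a s s
        _ = 0 := by simp [ih]

theorem lev_eq_zero {s z : List T}
    (h : levenshtein Levenshtein.defaultCost s z = 0) : s = z := by
  induction s generalizing z with
  | nil =>
      cases z with
      | nil => rfl
      | cons b z => simp [levenshtein_nil_cons] at h
  | cons a s ih =>
      cases z with
      | nil => simp [levenshtein_cons_nil] at h
      | cons b z =>
          rw [levenshtein_cons_cons] at h
          rcases Nat.min_eq_zero_iff.mp h with h1 | h1
          · simp at h1
          rcases Nat.min_eq_zero_iff.mp h1 with h2 | h2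
          · simp at h2
          · rcases Nat.add_eq_zero.mp h2 with ⟨h3, h4⟩
            obtain rfl : a = b := by by_contra hne; simp [hne] at h3
            rw [ih h4]

/-- An alignment between terminal strings bounds the edit distance. -/
theorem align_le_lev {w : List ((N ⊕ Unit) ⊕ T)} {v : List (N ⊕ T)} {k : ℕ}
    (h : Align w v k) :
    ∀ {s : List T}, w = s.map Sum.inr →
    ∃ z : List T, v = z.map Sum.inr ∧ levenshtein Levenshtein.defaultCost s z ≤ k := by
  induction h with
  | nil =>
      intro s hs
      obtain rfl : s = [] := by simpa using hs.symm
      exact ⟨[], rfl, by simp⟩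
  | nt A h ih =>
      rintro (_ | ⟨c, s⟩) hs <;> simp at hs
  | tt a b h ih =>
      rintro (_ | ⟨c, s⟩) hs
      · simp at hs
      · obtain ⟨rfl, hs'⟩ : a = c ∧ _ = List.map Sum.inr s := by simpa using hs
        obtain ⟨z, rfl, hz⟩ := ih hs'
        exact ⟨b :: z, rfl, (lev_le_sub a b s z).trans (by omega)⟩
  | insI h ih =>
      rintro (_ | ⟨c, s⟩) hs <;> simp at hs
  | insT a h ih =>
      rintro (_ | ⟨c, s⟩) hs
      · simp at hs
      · obtain ⟨rfl, hs'⟩ : a = c ∧ _ = List.map Sum.inr s := by simpa using hs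
        obtain ⟨z, rfl, hz⟩ := ih hs'
        exact ⟨z, rfl, (lev_le_del a s z).trans (by omega)⟩
  | delT b h ih =>
      intro s hs
      obtain ⟨z, rfl, hz⟩ := ih hs
      exact ⟨b :: z, rfl, (lev_le_ins b s z).trans (by omega)⟩

/-! ### Soundness of the augmented grammar -/

theorem CNF.aug_sound {G : CNF N T} {w : List ((N ⊕ Unit) ⊕ T)} {c : ℕ}
    (h : ScoredDerives G.augProds [Sum.inl (Sum.inl G.start)] w c) :
    ∃ v k, ScoredDerives G.prods [Sum.inl G.start] v 0 ∧ Align w v k ∧ k ≤ c := by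
  induction h with
  | refl => exact ⟨[Sum.inl G.start], 0, .refl _, Align.nil.nt G.start, le_refl 0⟩
  | @step l r p c h hp ih =>
      obtain ⟨v, k, hv, ha, hk⟩ := ih
      rcases hp with ((((⟨q, hq, rfl⟩ | ⟨A, y, hx, hy, rfl⟩) | ⟨x, rfl⟩) |
        ⟨A, hIA | hAI⟩) | hIII) | ⟨A, x, hx, rfl⟩
      · -- lifted production of `G`
        obtain ⟨v1, v2, k1, k2, rfl, h1, h2, rfl⟩ := ha.splitNT (l := l) (r := r) (A := q.lhs)
          (by simp [liftProd])
        have hv' := ScoredDerives.step (p := q) (l := v1) (r := v2) (by simpa using hv) hq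
        rw [G.prods_score_zero hq] at hv'
        refine ⟨v1 ++ q.rhs ++ v2, k1 + (0 + k2), hv', ?_, ?_⟩
        · have := h1.app ((align_lift q.rhs).app h2)
          simpa [liftProd] using this
        · have : (liftProd q).score = 0 := by simp [liftProd, G.prods_score_zero hq]
          omega
      · -- elementary substitution
        obtain ⟨x, hx⟩ := hx
        obtain ⟨v1, v2, k1, k2, rfl, h1, h2, rfl⟩ := ha.splitNT (l := l) (r := r) (A := A)
          (by simp)
        have hv' := ScoredDerives.step (p := ⟨A, [Sum.inr x], 0⟩) (l := v1) (r := v2)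
          (by simpa using hv) (G.mem_prods_term hx)
        rw [show (⟨A, [Sum.inr x], 0⟩ : ScoredProd N T).score = 0 from rfl] at hv'
        refine ⟨v1 ++ [Sum.inr x] ++ v2, k1 + (k2 + if y = x then 0 else 1), hv', ?_, ?_⟩
        · have := h1.app (h2.tt y x)
          simpa using this
        · have : (if y = x then 0 else 1) ≤ 1 := by split <;> omega
          simp only [ScoredProd.mk.injEq] at *
          omega
      · -- elementary insertion
        obtain ⟨v1, v2, k1, k2, rfl, h1, h2, rfl⟩ := ha.splitI (l := l) (r := r) (by simp)
        refine ⟨v1 ++ v2, k1 + (k2 + 1), hv, ?_, by show _ ≤ c + 1; omega⟩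
        have := h1.app (h2.insT x)
        simpa using this
      · -- rule `A → IA`
        obtain rfl := hIA
        obtain ⟨v1, v2, k1, k2, rfl, h1, h2, rfl⟩ := ha.splitNT (l := l) (r := r) (A := A)
          (by simp)
        refine ⟨v1 ++ Sum.inl A :: v2, k1 + k2, by simpa using hv, ?_, by omega⟩
        have := h1.app ((h2.nt A).insI)
        simpa using this
      · -- rule `A → AI`
        obtain rfl := hAI
        obtain ⟨v1, v2, k1, k2, rfl, h1, h2, rfl⟩ := ha.splitNT (l := l) (r := r) (A := A)
          (by simp)
        refine ⟨v1 ++ Sum.inl A :: v2, k1 + k2, by simpa using hv, ?_, by omega⟩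
        have := h1.app ((h2.insI).nt A)
        simpa using this
      · -- rule `I → II`
        obtain rfl := hIII
        obtain ⟨v1, v2, k1, k2, rfl, h1, h2, rfl⟩ := ha.splitI (l := l) (r := r) (by simp)
        refine ⟨v1 ++ v2, k1 + k2, hv, ?_, by omega⟩
        have := h1.app (h2.insI.insI)
        simpa using this
      · -- elementary deletion
        obtain ⟨v1, v2, k1, k2, rfl, h1, h2, rfl⟩ := ha.splitNT (l := l) (r := r) (A := A)
          (by simp)
        have hv' := ScoredDerives.step (p := ⟨A, [Sum.inr x], 0⟩) (l := v1) (r := v2)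
          (by simpa using hv) (G.mem_prods_term hx)
        rw [show (⟨A, [Sum.inr x], 0⟩ : ScoredProd N T).score = 0 from rfl] at hv'
        refine ⟨v1 ++ [Sum.inr x] ++ v2, k1 + (k2 + 1), hv', ?_, by show _ ≤ c + 1; omega⟩
        have := h1.app (h2.delT x)
        simpa using this

/-! ### Characterisation of edit distance at most one -/

/-- `s` is obtained from `z` by exactly one elementary edit. -/
def OneEdit (s z : List T) : Prop :=
  (∃ l x r, s = l ++ x :: r ∧ z = l ++ r) ∨
  (∃ l x r, s = l ++ r ∧ z = l ++ x :: r) ∨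
  (∃ l x y r, s = l ++ x :: r ∧ z = l ++ y :: r ∧ x ≠ y)

theorem OneEdit.cons {s z : List T} (a : T) (h : OneEdit s z) : OneEdit (a :: s) (a :: z) := by
  rcases h with ⟨l, x, r, rfl, rfl⟩ | ⟨l, x, r, rfl, rfl⟩ | ⟨l, x, y, r, rfl, rfl, hxy⟩
  · exact Or.inl ⟨a :: l, x, r, rfl, rfl⟩
  · exact Or.inr <| Or.inl ⟨a :: l, x, r, rfl, rfl⟩
  · exact Or.inr <| Or.inr ⟨a :: l, x, y, r, rfl, rfl, hxy⟩

theorem lev_le_one {s z : List T}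
    (h : levenshtein Levenshtein.defaultCost s z ≤ 1) : s = z ∨ OneEdit s z := by
  induction s generalizing z with
  | nil =>
      cases z with
      | nil => exact Or.inl rfl
      | cons b z =>
          rw [levenshtein_nil_cons] at h
          have hz : levenshtein Levenshtein.defaultCost ([] : List T) z = 0 := by
            simp at h; omega
          obtain rfl : ([] : List T) = z := lev_eq_zero hz
          exact Or.inr <| Or.inr <| Or.inl ⟨[], b, [], rfl, rfl⟩
  | cons a s ih =>
      cases z with
      | nil =>
          rw [levenshtein_cons_nil] at h
          have hz : levenshtein Levenshtein.defaultCost s ([] : List T) = 0 := by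
            simp at h; omega
          obtain rfl : s = [] := lev_eq_zero hz
          exact Or.inr <| Or.inl ⟨[], a, [], rfl, rfl⟩
      | cons b z =>
          rw [levenshtein_cons_cons] at h
          rcases min_le_iff.mp h with h1 | h1
          · -- delete branch
            have hz : levenshtein Levenshtein.defaultCost s (b :: z) = 0 := by
              simp only [Levenshtein.defaultCost_delete] at h1; omega
            obtain rfl := lev_eq_zero hz
            exact Or.inr <| Or.inl ⟨[], a, b :: z, rfl, rfl⟩
          rcases min_le_iff.mp h1 with h2 | h2
          · -- insert branch
            have hz : levenshtein Levenshtein.defaultCost (a :: s) z = 0 := by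
              simp only [Levenshtein.defaultCost_insert] at h2; omega
            obtain hz' := lev_eq_zero hz
            exact Or.inr <| Or.inr <| Or.inl ⟨[], b, a :: s, rfl, by rw [hz']; rfl⟩
          · -- substitute branch
            by_cases hab : a = b
            · subst hab
              simp at h2
              rcases ih h2 with rfl | h3
              · exact Or.inl rfl
              · exact Or.inr (h3.cons a)
            · have hz : levenshtein Levenshtein.defaultCost s z = 0 := by
                simp only [Levenshtein.defaultCost_substitute, if_neg hab] at h2; omega
              obtain rfl := lev_eq_zero hz
              exact Or.inr <| Or.inr <| Or.inr ⟨[], a, b, s, rfl, rfl, hab⟩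

/-! ### Completeness constructions -/

theorem CNF.mem_aug_term {G : CNF N T} {A : N} {x : T} (hx : (A, x) ∈ G.term) :
    (⟨Sum.inl A, [Sum.inr x], 0⟩ : ScoredProd (N ⊕ Unit) T) ∈ G.augProds :=
  Or.inl <| Or.inl <| Or.inl <| Or.inl <| Or.inl <|
    ⟨⟨A, [Sum.inr x], 0⟩, G.mem_prods_term hx, rfl⟩

theorem CNF.lang_aug {G : CNF N T} {s : List T} (hs : s ∈ G.lang) :
    G.augDerives (Sum.inl G.start) s 0 := by
  obtain ⟨u, hu⟩ := hs
  obtain rfl := G.derives_score_zero hu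
  have := CNF.liftDerives hu
  simpa [CNF.augDerives, Function.comp_def, liftSym] using this

theorem CNF.aug0_iff {G : CNF N T} {s : List T} :
    G.augDerives (Sum.inl G.start) s 0 ↔ s ∈ G.lang := by
  constructor
  · intro h
    obtain ⟨v, k, hv, ha, hk⟩ := G.aug_sound h
    obtain ⟨z, rfl, hz⟩ := align_le_lev ha rfl
    obtain rfl : s = z := lev_eq_zero (by omega)
    exact ⟨0, hv⟩
  · exact CNF.lang_aug

/-- Splice an augmented derivation from a nonterminal `A` into a derivation of `G`. -/
theorem CNF.build {G : CNF N T} {w1 w2 : List (N ⊕ T)} {A : N} {l r : List T}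
    {mid : List ((N ⊕ Unit) ⊕ T)} {c : ℕ}
    (hw : ScoredDerives G.prods [Sum.inl G.start] (w1 ++ [Sum.inl A] ++ w2) 0)
    (h1 : ScoredDerives G.prods w1 (l.map Sum.inr) 0)
    (h2 : ScoredDerives G.prods w2 (r.map Sum.inr) 0)
    (hmid : ScoredDerives G.augProds [Sum.inl (Sum.inl A)] mid c) :
    ScoredDerives G.augProds [Sum.inl (Sum.inl G.start)]
      ((l.map Sum.inr) ++ mid ++ (r.map Sum.inr)) c := by
  have hw' : ScoredDerives G.augProds [Sum.inl (Sum.inl G.start)]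
      (w1.map liftSym ++ ([Sum.inl (Sum.inl A)] ++ w2.map liftSym)) 0 := by
    have := CNF.liftDerives hw
    simpa using this
  have h1' : ScoredDerives G.augProds (w1.map liftSym) (l.map Sum.inr) 0 := by
    have := CNF.liftDerives h1
    simpa [Function.comp_def, liftSym] using this
  have h2' : ScoredDerives G.augProds (w2.map liftSym) (r.map Sum.inr) 0 := by
    have := CNF.liftDerives h2
    simpa [Function.comp_def, liftSym] using this
  have := hw'.trans (h1'.append (hmid.append h2'))
  simpa using this

/-- `[Sum.inl G.start]` cannot contain a terminal. -/
theorem CNF.no_term_start {G : CNF N T} {u1 u2 : List (N ⊕ T)} {y : T}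
    (h : [Sum.inl G.start] = u1 ++ Sum.inr y :: u2) : False := by
  have hmem : (Sum.inr y : N ⊕ T) ∈ [Sum.inl G.start] := by rw [h]; simp
  simp at hmem

theorem CNF.oneEdit_aug {G : CNF N T} {s z : List T} (hz : z ∈ G.lang) (hs : s ∉ G.lang)
    (h : OneEdit s z) : G.augDerives (Sum.inl G.start) s 1 := by
  obtain ⟨u, hu⟩ := hz
  obtain rfl := G.derives_score_zero hu
  rcases h with ⟨l, x, r, hseq, hzeq⟩ | ⟨l, x, r, hseq, hzeq⟩ | ⟨l, x, y, r, hseq, hzeq, hxy⟩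
  · -- insertion : `s = l ++ x :: r`, `z = l ++ r`
    subst hseq
    cases r with
    | nil =>
        -- `s = l ++ [x]`, insert at the end
        simp only [List.append_nil] at hzeq
        subst hzeq
        have h0 := ScoredDerives.head (G.mem_aug_AI G.start)
        have h1 : ScoredDerives G.augProds
            ([Sum.inl (Sum.inl G.start)] ++ [Sum.inl (Sum.inr ())])
            (z.map Sum.inr ++ [Sum.inl (Sum.inr ())]) 0 := by
          have := CNF.liftDerives hu
          exact (ScoredDerives.append (by simpa [Function.comp_def, liftSym] using this)
            (ScoredDerives.refl _)).cast (by omega)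
        have h2 := (ScoredDerives.refl (z.map Sum.inr)).append
          (ScoredDerives.head (G.mem_aug_ins x))
        have := (h0.trans h1).trans h2
        simpa [CNF.augDerives] using this
    | cons x0 r' =>
        subst hzeq
        have hfac := CNF.factor hu (α := l.map Sum.inr) (β := r'.map Sum.inr) (x := x0) (by simp)
        rcases hfac with ⟨u1, u2, hu', _, _⟩ | ⟨w1, A, w2, hw, hA, h1, h2⟩
        · exact absurd hu' G.no_term_start
        · have hmid : ScoredDerives G.augProds [Sum.inl (Sum.inl A)]
              [Sum.inr x, Sum.inr x0] 1 := by
            have ha := ScoredDerives.head (G.mem_aug_IA A)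
            have hb := (ScoredDerives.head (G.mem_aug_ins x)).append
              (ScoredDerives.refl [Sum.inl (Sum.inl A)])
            have hc := (ScoredDerives.refl [(Sum.inr x : (N ⊕ Unit) ⊕ T)]).append
              (ScoredDerives.head (G.mem_aug_term hA))
            have := (ha.trans hb).trans hc
            simpa using this
          have := G.build hw h1 h2 hmid
          simpa [CNF.augDerives] using this
  · -- deletion : `s = l ++ r`, `z = l ++ x :: r`
    subst hseq hzeq
    have hfac := CNF.factor hu (α := l.map Sum.inr) (β := r.map Sum.inr) (x := x) (by simp)
    rcases hfac with ⟨u1, u2, hu', _, _⟩ | ⟨w1, A, w2, hw, hA, h1, h2⟩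
    · exact absurd hu' G.no_term_start
    · have hmid : ScoredDerives G.augProds [Sum.inl (Sum.inl A)] [] 1 :=
        ScoredDerives.head (G.mem_aug_del hA)
      have := G.build hw h1 h2 hmid
      simpa [CNF.augDerives] using this
  · -- substitution : `s = l ++ x :: r`, `z = l ++ y :: r`, `x ≠ y`
    subst hseq hzeq
    have hfac := CNF.factor hu (α := l.map Sum.inr) (β := r.map Sum.inr) (x := y) (by simp)
    rcases hfac with ⟨u1, u2, hu', _, _⟩ | ⟨w1, A, w2, hw, hA, h1, h2⟩
    · exact absurd hu' G.no_term_start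
    · by_cases hAx : (A, x) ∈ G.term
      · exfalso
        apply hs
        have hstep := ScoredDerives.step (p := ⟨A, [Sum.inr x], 0⟩) (l := w1) (r := w2)
          (by simpa using hw) (G.mem_prods_term hAx)
        have hstep' : ScoredDerives G.prods [Sum.inl G.start] (w1 ++ ([Sum.inr x] ++ w2)) 0 := by
          simpa using hstep
        have := hstep'.trans (h1.append ((ScoredDerives.refl [(Sum.inr x : N ⊕ T)]).append h2))
        exact ⟨_, by simpa using this⟩
      · have hmid : ScoredDerives G.augProds [Sum.inl (Sum.inl A)] [Sum.inr x] 1 :=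
          ScoredDerives.head (G.mem_aug_sub ⟨y, hA⟩ hAx)
        have := G.build hw h1 h2 hmid
        simpa [CNF.augDerives] using this

end Aux

/-- For every string `s` over `Σ`: `d_G(G,s) = 0` iff there is a derivation
of `s` from `S` in `G_e` of score `0`; and `d_G(G,s) = 1` iff there is a derivation of `s`
from `S` in `G_e` of score `1` and none of score `0`. -/
theorem language_edit_distance_zero_one {N T : Type*} [DecidableEq T]
    (G : CNF N T) (hne : G.lang.Nonempty) (s : List T) :
    (dG G s = 0 ↔ G.augDerives (Sum.inl G.start) s 0) ∧
    (dG G s = 1 ↔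
      (G.augDerives (Sum.inl G.start) s 1 ∧ ¬ G.augDerives (Sum.inl G.start) s 0)) := by
  have hDne : {d | ∃ z ∈ G.lang, editDist s z = d}.Nonempty := by
    obtain ⟨z0, hz0⟩ := hne
    exact ⟨editDist s z0, z0, hz0, rfl⟩
  have hzeroD : (0 ∈ {d | ∃ z ∈ G.lang, editDist s z = d}) ↔ s ∈ G.lang := by
    constructor
    · rintro ⟨z, hz, he⟩
      obtain rfl : s = z := lev_eq_zero he
      exact hz
    · intro h
      exact ⟨s, h, lev_self s⟩
  have hd0 : dG G s = 0 ↔ s ∈ G.lang := by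
    rw [dG, Nat.sInf_eq_zero]
    constructor
    · rintro (h | h)
      · exact hzeroD.mp h
      · exact absurd h hDne.ne_empty
    · intro h
      exact Or.inl (hzeroD.mpr h)
  constructor
  · rw [hd0]
    exact CNF.aug0_iff.symm
  · constructor
    · intro h1
      have hsl : s ∉ G.lang := by
        intro hsl
        rw [← hd0] at hsl
        omega
      refine ⟨?_, fun h0 => hsl (CNF.aug0_iff.mp h0)⟩
      have hmem : 1 ∈ {d | ∃ z ∈ G.lang, editDist s z = d} := h1 ▸ Nat.sInf_mem hDne
      obtain ⟨z, hz, he⟩ := hmem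
      rcases lev_le_one (le_of_eq he) with rfl | hOE
      · exact absurd hz hsl
      · exact G.oneEdit_aug hz hsl hOE
    · rintro ⟨h1, h0⟩
      have hsl : s ∉ G.lang := fun h => h0 (CNF.lang_aug h)
      obtain ⟨v, k, hv, ha, hk⟩ := G.aug_sound h1
      obtain ⟨z, rfl, hlz⟩ := align_le_lev ha rfl
      have hzl : z ∈ G.lang := ⟨0, hv⟩
      have hne1 : levenshtein Levenshtein.defaultCost s z ≠ 0 := by
        intro h
        exact hsl (lev_eq_zero h ▸ hzl)
      have hle : dG G s ≤ 1 := by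
        apply Nat.sInf_le
        exact ⟨z, hzl, by simp only [editDist]; omega⟩
      have hne0 : dG G s ≠ 0 := fun h => hsl (hd0.mp h)
      omega
end

section
/- Under the rounded binary-tree process: for every leaf l, Var(X_l) = (score(l) − ⌊score(l)⌋_δ)(⌈score(l)⌉_δ − score(l)); and for every internal node v with children v1 and v2, Var(X_v) ≤ Var(X_{v1}) + Var(X_{v2}) + δ·(Σ_{g ∈ L(v1)} score(g))·(Σ_{h ∈ L(v2)} score(h)). -/
open MeasureTheory ProbabilityTheory
open scoped ENNReal

/-- `⌊log_{1+δ} y⌋` as a natural number (for `y ≥ 1` the logarithm is nonnegative). -/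
noncomputable def rExp (δ y : ℝ) : ℕ := ⌊Real.logb (1 + δ) y⌋₊

/-- `⌊y⌋_δ = (1+δ)^{⌊log_{1+δ} y⌋}`. -/
noncomputable def rfloor (δ y : ℝ) : ℝ := (1 + δ) ^ rExp δ y

/-- `⌈y⌉_δ = (1+δ)^{⌈log_{1+δ} y⌉}`. -/
noncomputable def rceil (δ y : ℝ) : ℝ := (1 + δ) ^ (⌈Real.logb (1 + δ) y⌉₊)

/-- The probability `k / (δ(1+δ)^r)` (where `y = (1+δ)^r + k`) that the randomized
rounding rounds up. -/
noncomputable def roundUpProb (δ y : ℝ) : ℝ≥0∞ :=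
  ENNReal.ofReal ((y - rfloor δ y) / (δ * rfloor δ y))

/-- The randomized rounding `Round_δ(y)`: equal to `(1+δ)^r` with probability
`(δ(1+δ)^r − k)/(δ(1+δ)^r)` and to `(1+δ)^{r+1}` with probability `k/(δ(1+δ)^r)`,
where `y = (1+δ)^r + k`, `r = ⌊log_{1+δ} y⌋` and `k ∈ [0, δ(1+δ)^r)`.
(For `δ > 0` and `y ≥ 1` the probability `k/(δ(1+δ)^r)` lies in `[0,1)`, so the
clamping `min · 1` below is vacuous.) -/
noncomputable def roundPMF (δ y : ℝ) : PMF ℝ :=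
  (PMF.bernoulli (min (roundUpProb δ y).toNNReal 1) (min_le_right _ _)).map
    (fun b => if b then (1 + δ) ^ (rExp δ y + 1) else rfloor δ y)

/-- Expectation of a real-valued probability mass function. -/
noncomputable def pmfExp (p : PMF ℝ) : ℝ := ∫ x, x ∂p.toMeasure

/-- Variance of a real-valued probability mass function. -/
noncomputable def pmfVar (p : PMF ℝ) : ℝ := variance (fun x => x) p.toMeasure

/-- A finite rooted binary tree in which every internal node has exactly two children and
every leaf carries a real score. -/
inductive BTree where
  | leaf (score : ℝ)
  | node (l r : BTree)

/-- The list of scores of the leaves of (the subtree rooted at) `t`. -/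
def BTree.leafScores : BTree → List ℝ
  | .leaf y => [y]
  | .node l r => l.leafScores ++ r.leafScores

/-- The distribution of the random variable `X_v` of the rounded binary-tree process at
the root of `t`: at a leaf, `X_l = Round_δ(score(l))`, independently across leaves; at an
internal node `v` with children `v1, v2`, conditioned on `X_{v1}` and `X_{v2}`,
`X_v = Round_δ(X_{v1} + X_{v2})`. -/
noncomputable def treePMF (δ : ℝ) : BTree → PMF ℝ
  | .leaf y => roundPMF δ y
  | .node l r => (treePMF δ l).bind fun x => (treePMF δ r).bind fun y => roundPMF δ (x + y)

/-- `Σ_{g < h} L_g · L_h`, the sum over unordered pairs of distinct positions of a list. -/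
noncomputable def pairSum (L : List ℝ) : ℝ :=
  ∑ p ∈ (Finset.range L.length ×ˢ Finset.range L.length).filter (fun p => p.1 < p.2),
    L.getD p.1 0 * L.getD p.2 0
section Helpers
variable {δ y : ℝ}

lemma one_lt_base (hδ : 0 < δ) : (1:ℝ) < 1 + δ := by linarith

lemma rfloor_pos (hδ : 0 < δ) : 0 < rfloor δ y :=
  pow_pos (by linarith) _

lemma rfloor_le (hδ : 0 < δ) (hy : 1 ≤ y) : rfloor δ y ≤ y := by
  have hb := one_lt_base hδ
  have hy0 : (0:ℝ) < y := by linarith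
  have hlog : 0 ≤ Real.logb (1 + δ) y := Real.logb_nonneg hb hy
  calc (1+δ) ^ rExp δ y = (1+δ) ^ ((rExp δ y : ℝ)) := (Real.rpow_natCast _ _).symm
    _ ≤ (1+δ) ^ (Real.logb (1 + δ) y) :=
        Real.rpow_le_rpow_of_exponent_le hb.le (Nat.floor_le hlog)
    _ = y := Real.rpow_logb (by linarith) hb.ne' hy0

lemma lt_pow_succ (hδ : 0 < δ) (hy : 1 ≤ y) : y < (1+δ) ^ (rExp δ y + 1) := by
  have hb := one_lt_base hδ
  have hy0 : (0:ℝ) < y := by linarith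
  calc y = (1+δ) ^ (Real.logb (1 + δ) y) := (Real.rpow_logb (by linarith) hb.ne' hy0).symm
    _ < (1+δ) ^ ((rExp δ y + 1 : ℕ) : ℝ) := by
        apply Real.rpow_lt_rpow_of_exponent_lt hb
        push_cast
        exact Nat.lt_floor_add_one _
    _ = (1+δ) ^ (rExp δ y + 1) := Real.rpow_natCast _ _

lemma pow_le_rfloor (hδ : 0 < δ) (hy : 1 ≤ y) {n : ℕ} (h : (1+δ)^n ≤ y) :
    (1+δ)^n ≤ rfloor δ y := by
  have hb := one_lt_base hδ
  have hy0 : (0:ℝ) < y := by linarith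
  have h1 : (n:ℝ) ≤ Real.logb (1+δ) y := by
    have h2 : Real.logb (1+δ) ((1+δ)^n) ≤ Real.logb (1+δ) y :=
      Real.logb_le_logb_of_le hb (by positivity) h
    rwa [Real.logb_pow, Real.logb_self_eq_one hb, mul_one] at h2
  have h2 : n ≤ rExp δ y := Nat.le_floor h1
  exact pow_le_pow_right₀ hb.le h2

end Helpers
section Helpers2
variable {δ y : ℝ}

/-- real round-up probability -/
noncomputable def rpr (δ y : ℝ) : ℝ := (y - rfloor δ y) / (δ * rfloor δ y)

lemma rpr_nonneg (hδ : 0 < δ) (hy : 1 ≤ y) : 0 ≤ rpr δ y :=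
  div_nonneg (by linarith [rfloor_le hδ hy]) (by nlinarith [rfloor_pos (y := y) hδ])

lemma pow_succ_eq (δ y : ℝ) : (1+δ) ^ (rExp δ y + 1) = rfloor δ y * (1+δ) := by
  rw [pow_succ]; rfl

lemma rpr_lt_one (hδ : 0 < δ) (hy : 1 ≤ y) : rpr δ y < 1 := by
  have h1 := lt_pow_succ hδ hy
  rw [pow_succ_eq] at h1
  have h2 := rfloor_pos (y := y) hδ
  rw [rpr, div_lt_one (by positivity)]
  nlinarith

lemma roundUpProb_eq : roundUpProb δ y = ENNReal.ofReal (rpr δ y) := rfl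

lemma min_roundUpProb (hδ : 0 < δ) (hy : 1 ≤ y) :
    ((min (roundUpProb δ y).toNNReal 1 : NNReal) : ℝ≥0∞) = roundUpProb δ y := by
  rw [min_eq_left, ENNReal.coe_toNNReal (by rw [roundUpProb_eq]; exact ENNReal.ofReal_ne_top)]
  rw [roundUpProb_eq, ← ENNReal.coe_le_coe, ENNReal.coe_toNNReal ENNReal.ofReal_ne_top, ENNReal.coe_one]
  exact ENNReal.ofReal_le_one.2 (rpr_lt_one hδ hy).le

lemma rfloor_lt_pow_succ (hδ : 0 < δ) : rfloor δ y < (1+δ) ^ (rExp δ y + 1) := by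
  rw [pow_succ_eq]
  nlinarith [rfloor_pos (y := y) hδ]

lemma roundPMF_support (hδ : 0 < δ) :
    (roundPMF δ y).support ⊆ ↑({rfloor δ y, (1+δ) ^ (rExp δ y + 1)} : Finset ℝ) := by
  rw [roundPMF, PMF.support_map]
  rintro x ⟨b, -, rfl⟩
  cases b <;> simp

/-- Sum of `p x * f x` over a finite set. -/
noncomputable def pSum (p : PMF ℝ) (s : Finset ℝ) (f : ℝ → ℝ) : ℝ :=
  ∑ x ∈ s, (p x).toReal * f x

lemma pSum_mono {p : PMF ℝ} {t t' : Finset ℝ} (h : t ⊆ t') (ht : p.support ⊆ t)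
    (f : ℝ → ℝ) : pSum p t' f = pSum p t f := by
  refine (Finset.sum_subset h fun x _ hxn => ?_).symm
  have hx : p x = 0 := (PMF.apply_eq_zero_iff p x).2 fun hmem => hxn (ht hmem)
  simp [hx]

lemma pSum_congr {p : PMF ℝ} {s s' : Finset ℝ} (hs : p.support ⊆ s) (hs' : p.support ⊆ s')
    (f : ℝ → ℝ) : pSum p s f = pSum p s' f := by
  rw [← pSum_mono Finset.subset_union_left hs f,
    pSum_mono Finset.subset_union_right hs' f]

lemma roundPMF_apply_floor (hδ : 0 < δ) (hy : 1 ≤ y) :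
    ((roundPMF δ y) (rfloor δ y)).toReal = 1 - rpr δ y := by
  have hab : rfloor δ y ≠ (1+δ) ^ (rExp δ y + 1) := (rfloor_lt_pow_succ hδ).ne
  rw [roundPMF, PMF.map_apply, tsum_bool]
  norm_num
  rw [if_neg hab]
  rw [PMF.bernoulli_apply, cond_false, add_zero, ENNReal.coe_sub, ENNReal.coe_one, min_roundUpProb hδ hy, roundUpProb_eq, ← ENNReal.ofReal_one,
    ← ENNReal.ofReal_sub _ (rpr_nonneg hδ hy),
    ENNReal.toReal_ofReal (by linarith [rpr_lt_one hδ hy])]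

lemma roundPMF_apply_ceil (hδ : 0 < δ) (hy : 1 ≤ y) :
    ((roundPMF δ y) ((1+δ) ^ (rExp δ y + 1))).toReal = rpr δ y := by
  have hab : (1+δ) ^ (rExp δ y + 1) ≠ rfloor δ y := (rfloor_lt_pow_succ hδ).ne'
  rw [roundPMF, PMF.map_apply, tsum_bool]
  norm_num
  rw [if_neg hab]
  rw [PMF.bernoulli_apply, cond_true, zero_add, min_roundUpProb hδ hy, roundUpProb_eq, ENNReal.toReal_ofReal (rpr_nonneg hδ hy)]

lemma pSum_round (hδ : 0 < δ) (hy : 1 ≤ y) (f : ℝ → ℝ) :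
    pSum (roundPMF δ y) {rfloor δ y, (1+δ) ^ (rExp δ y + 1)} f =
      (1 - rpr δ y) * f (rfloor δ y) + rpr δ y * f ((1+δ) ^ (rExp δ y + 1)) := by
  rw [pSum, Finset.sum_pair (rfloor_lt_pow_succ hδ).ne,
    roundPMF_apply_floor hδ hy, roundPMF_apply_ceil hδ hy]

end Helpers2
section Helpers3
variable {p : PMF ℝ} {s : Finset ℝ}

lemma pmf_ae_mem (hs : p.support ⊆ s) : ∀ᵐ x ∂p.toMeasure, x ∈ (s : Set ℝ) := by
  rw [MeasureTheory.ae_iff]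
  have hms : MeasurableSet ((s : Set ℝ)ᶜ) := (s.finite_toSet.measurableSet).compl
  have : {a : ℝ | ¬a ∈ (s : Set ℝ)} = (↑s : Set ℝ)ᶜ := rfl
  rw [this, PMF.toMeasure_apply_eq_zero_iff (hs := hms)]
  exact Set.disjoint_compl_right_iff_subset.mpr hs

lemma pmf_bound (hs : p.support ⊆ s) (f : ℝ → ℝ) :
    ∀ᵐ x ∂p.toMeasure, ‖f x‖ ≤ ∑ a ∈ s, ‖f a‖ := by
  filter_upwards [pmf_ae_mem hs] with x hx
  exact Finset.single_le_sum (fun a _ => norm_nonneg (f a)) hx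

lemma pmf_integrable (hs : p.support ⊆ s) {f : ℝ → ℝ} (hf : Measurable f) :
    MeasureTheory.Integrable f p.toMeasure := by
  refine (MeasureTheory.integrable_const (∑ a ∈ s, ‖f a‖)).mono'
    hf.aestronglyMeasurable ?_
  exact pmf_bound hs f

lemma integral_pmf (hs : p.support ⊆ s) {f : ℝ → ℝ} (hf : Measurable f) :
    ∫ x, f x ∂p.toMeasure = pSum p s f := by
  rw [PMF.integral_eq_tsum p f (pmf_integrable hs hf)]
  rw [tsum_eq_sum (s := s) (fun b hb => by
    have hb0 : p b = 0 := (PMF.apply_eq_zero_iff p b).2 fun hmem => hb (hs hmem)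
    simp [hb0])]
  simp [pSum, smul_eq_mul]

lemma pSum_one (hs : p.support ⊆ s) : pSum p s (fun _ => 1) = 1 := by
  rw [← integral_pmf hs measurable_const]
  simp

lemma pmfVar_eq (hs : p.support ⊆ s) :
    pmfVar p = pSum p s (fun x => x ^ 2) - (pSum p s id) ^ 2 := by
  have hmem : MeasureTheory.MemLp (fun x : ℝ => x) 2 p.toMeasure := by
    refine MeasureTheory.MemLp.of_bound measurable_id.aestronglyMeasurable
      (∑ a ∈ s, ‖a‖) ?_
    exact pmf_bound hs _
  rw [pmfVar, ProbabilityTheory.variance_eq_sub hmem]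
  have h1 : ((fun x : ℝ => x) ^ 2) = fun x : ℝ => x ^ 2 := by
    ext x; simp [pow_two]
  rw [h1, integral_pmf (f := fun x : ℝ => x ^ 2) hs (by fun_prop),
    show (∫ x, (fun x : ℝ => x) x ∂p.toMeasure) = pSum p s id from
      integral_pmf hs measurable_id]

lemma pSum_bind (q : ℝ → PMF ℝ) (hs : p.support ⊆ s) (t : Finset ℝ) (f : ℝ → ℝ) :
    pSum (p.bind q) t f = ∑ a ∈ s, (p a).toReal * pSum (q a) t f := by
  rw [pSum]
  have key : ∀ x : ℝ, ((p.bind q) x).toReal = ∑ a ∈ s, (p a).toReal * (q a x).toReal := by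
    intro x
    rw [PMF.bind_apply]
    rw [tsum_eq_sum (s := s) (fun b hb => by
      have hb0 : p b = 0 := (PMF.apply_eq_zero_iff p b).2 fun hmem => hb (hs hmem)
      simp [hb0])]
    rw [ENNReal.toReal_sum (fun a _ => ENNReal.mul_ne_top (PMF.apply_ne_top p a)
      (PMF.apply_ne_top (q a) x))]
    simp [ENNReal.toReal_mul]
  simp_rw [key, Finset.sum_mul]
  rw [Finset.sum_comm]
  simp [pSum, Finset.mul_sum, mul_assoc]

end Helpers3
section Helpers4
variable {δ y : ℝ}

/-- conditional variance of the rounding -/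
noncomputable def gvar (δ y : ℝ) : ℝ := (y - rfloor δ y) * ((1+δ) ^ (rExp δ y + 1) - y)

lemma rpr_mul (hδ : 0 < δ) (hy : 1 ≤ y) :
    rpr δ y * (δ * rfloor δ y) = y - rfloor δ y := by
  rw [rpr, div_mul_cancel₀]
  nlinarith [rfloor_pos (y := y) hδ]

lemma round_mean (hδ : 0 < δ) (hy : 1 ≤ y) :
    pSum (roundPMF δ y) {rfloor δ y, (1+δ) ^ (rExp δ y + 1)} id = y := by
  rw [pSum_round hδ hy]
  have h1 := rpr_mul hδ hy
  have h2 := pow_succ_eq δ y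
  simp only [id]
  rw [h2]
  linear_combination h1

lemma round_sq (hδ : 0 < δ) (hy : 1 ≤ y) :
    pSum (roundPMF δ y) {rfloor δ y, (1+δ) ^ (rExp δ y + 1)} (fun x => x ^ 2) =
      y ^ 2 + gvar δ y := by
  rw [pSum_round hδ hy]
  have h1 := rpr_mul hδ hy
  have h2 := pow_succ_eq δ y
  rw [gvar, h2]
  linear_combination (rfloor δ y * (1+δ) + rfloor δ y) * h1

lemma round_var (hδ : 0 < δ) (hy : 1 ≤ y) :
    pmfVar (roundPMF δ y) = gvar δ y := by
  rw [pmfVar_eq (roundPMF_support hδ), round_mean hδ hy, round_sq hδ hy]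
  ring

lemma gvar_eq_rceil (hδ : 0 < δ) (hy : 1 ≤ y) :
    gvar δ y = (y - rfloor δ y) * (rceil δ y - y) := by
  have hb := one_lt_base hδ
  have hy0 : (0:ℝ) < y := by linarith
  rcases eq_or_lt_of_le (rfloor_le hδ hy) with h | h
  · rw [gvar, h, sub_self, zero_mul, zero_mul]
  · have hlt := lt_pow_succ hδ hy
    have hgt : (rExp δ y : ℝ) < Real.logb (1+δ) y := by
      have := Real.logb_lt_logb hb (rfloor_pos (y := y) hδ) h
      rwa [rfloor, Real.logb_pow, Real.logb_self_eq_one hb, mul_one] at this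
    have hle : Real.logb (1+δ) y ≤ (rExp δ y : ℝ) + 1 := by
      have := Real.logb_lt_logb hb hy0 hlt
      rw [Real.logb_pow, Real.logb_self_eq_one hb, mul_one] at this
      exact_mod_cast this.le
    have hceil : ⌈Real.logb (1+δ) y⌉₊ = rExp δ y + 1 := by
      rw [Nat.ceil_eq_iff (Nat.succ_ne_zero _)]
      constructor
      · simpa using hgt
      · exact_mod_cast hle
    rw [gvar, rceil, hceil]

lemma gvar_nonneg (hδ : 0 < δ) (hy : 1 ≤ y) : 0 ≤ gvar δ y := by
  have h1 := rfloor_le hδ hy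
  have h2 := lt_pow_succ hδ hy
  rw [gvar]
  nlinarith

lemma one_le_pow_base (hδ : 0 < δ) (n : ℕ) : (1:ℝ) ≤ (1+δ)^n :=
  one_le_pow₀ (by linarith)

lemma gvar_le_aux (hδ : 0 < δ) {x y : ℝ} (hx : ∃ m : ℕ, x = (1+δ)^m)
    (hy : ∃ n : ℕ, y = (1+δ)^n) (hxy : x ≤ y) : gvar δ (x + y) ≤ δ * x * y := by
  obtain ⟨m, rfl⟩ := hx
  obtain ⟨n, rfl⟩ := hy
  set x := (1+δ)^m with hxdef
  set y := (1+δ)^n with hydef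
  have hx1 : (1:ℝ) ≤ x := one_le_pow_base hδ m
  have hy1 : (1:ℝ) ≤ y := one_le_pow_base hδ n
  have hs1 : (1:ℝ) ≤ x + y := by linarith
  set a := rfloor δ (x + y) with hadef
  have ha_le : a ≤ x + y := rfloor_le hδ hs1
  have hy_le_a : y ≤ a := pow_le_rfloor hδ hs1 (by rw [← hydef]; linarith)
  have hx_le_a : x ≤ a := le_trans hxy hy_le_a
  have hB : (1+δ) ^ (rExp δ (x+y) + 1) = a * (1+δ) := pow_succ_eq δ (x+y)
  have hsB : x + y < (1+δ) ^ (rExp δ (x+y) + 1) := lt_pow_succ hδ hs1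
  rw [gvar, hB]
  rw [hB] at hsB
  nlinarith [mul_nonneg hδ.le (mul_nonneg (sub_nonneg.2 hx_le_a) (sub_nonneg.2 hy_le_a)),
    sq_nonneg (x + y - a)]

/-- the key bound on the conditional variance at an internal node -/
lemma gvar_le (hδ : 0 < δ) {x y : ℝ} (hx : ∃ m : ℕ, x = (1+δ)^m)
    (hy : ∃ n : ℕ, y = (1+δ)^n) : gvar δ (x + y) ≤ δ * x * y := by
  rcases le_total x y with hxy | hxy
  · exact gvar_le_aux hδ hx hy hxy
  · have := gvar_le_aux hδ hy hx hxy
    rw [add_comm] at this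
    linarith [this]

end Helpers4
section Helpers5
variable {δ : ℝ} {p : PMF ℝ} {s : Finset ℝ}

lemma weight_sum (hs : p.support ⊆ s) : ∑ x ∈ s, (p x).toReal = 1 := by
  simpa [pSum] using pSum_one hs

lemma pSum_add (f g : ℝ → ℝ) :
    pSum p s (fun x => f x + g x) = pSum p s f + pSum p s g := by
  simp [pSum, mul_add, Finset.sum_add_distrib]

lemma pSum_const_mul (c : ℝ) (f : ℝ → ℝ) :
    pSum p s (fun x => c * f x) = c * pSum p s f := by
  simp [pSum, Finset.mul_sum, mul_left_comm]

lemma pSum_const (hs : p.support ⊆ s) (c : ℝ) : pSum p s (fun _ => c) = c := by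
  have h1 : pSum p s (fun _ => c) = c * pSum p s (fun _ => 1) := by
    simpa using pSum_const_mul (p := p) (s := s) c (fun _ => 1)
  rw [h1, pSum_one hs, mul_one]

lemma treePMF_leaf (y : ℝ) : treePMF δ (BTree.leaf y) = roundPMF δ y := rfl

lemma treePMF_node (l r : BTree) : treePMF δ (BTree.node l r) =
    (treePMF δ l).bind fun x => (treePMF δ r).bind fun y => roundPMF δ (x + y) := rfl

/-- The invariant carried up the tree. -/
lemma tree_invariant (hδ : 0 < δ) (t : BTree) (ht : ∀ y ∈ t.leafScores, 1 ≤ y) :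
    ∃ s : Finset ℝ, (treePMF δ t).support ⊆ ↑s ∧ (∀ x ∈ s, ∃ m : ℕ, x = (1+δ)^m) ∧
      pSum (treePMF δ t) s id = t.leafScores.sum := by
  induction t with
  | leaf y =>
    have hy : 1 ≤ y := ht y (by simp [BTree.leafScores])
    refine ⟨{rfloor δ y, (1+δ) ^ (rExp δ y + 1)}, roundPMF_support hδ, ?_, ?_⟩
    · intro x hx
      rcases Finset.mem_insert.1 hx with h | h
      · exact ⟨rExp δ y, h⟩
      · exact ⟨rExp δ y + 1, Finset.mem_singleton.1 h⟩
    · rw [treePMF_leaf, round_mean hδ hy]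
      simp [BTree.leafScores]
  | node l r ihl ihr =>
    obtain ⟨s1, hs1, hpow1, hmean1⟩ := ihl (fun y hy => ht y (by
      simp [BTree.leafScores]; exact Or.inl hy))
    obtain ⟨s2, hs2, hpow2, hmean2⟩ := ihr (fun y hy => ht y (by
      simp [BTree.leafScores]; exact Or.inr hy))
    set p1 := treePMF δ l
    set p2 := treePMF δ r
    have hone1 : ∀ x ∈ s1, (1:ℝ) ≤ x := fun x hx => by
      obtain ⟨m, rfl⟩ := hpow1 x hx; exact one_le_pow_base hδ m
    have hone2 : ∀ x ∈ s2, (1:ℝ) ≤ x := fun x hx => by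
      obtain ⟨m, rfl⟩ := hpow2 x hx; exact one_le_pow_base hδ m
    classical
    refine ⟨(s1 ×ˢ s2).biUnion (fun q =>
      {rfloor δ (q.1 + q.2), (1+δ) ^ (rExp δ (q.1 + q.2) + 1)}), ?_, ?_, ?_⟩
    · rw [treePMF_node]
      intro z hz
      rw [PMF.support_bind] at hz
      obtain ⟨x, hx, hz⟩ := Set.mem_iUnion₂.1 hz
      rw [PMF.support_bind] at hz
      obtain ⟨y, hy, hz⟩ := Set.mem_iUnion₂.1 hz
      have hz2 := roundPMF_support hδ hz
      simp only [Finset.coe_biUnion, Set.mem_iUnion]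
      exact ⟨(x, y), Finset.mem_product.2 ⟨hs1 hx, hs2 hy⟩, hz2⟩
    · intro x hx
      rw [Finset.mem_biUnion] at hx
      obtain ⟨q, _, hq⟩ := hx
      rcases Finset.mem_insert.1 hq with h | h
      · exact ⟨rExp δ (q.1 + q.2), h⟩
      · exact ⟨rExp δ (q.1 + q.2) + 1, Finset.mem_singleton.1 h⟩
    · set T := (s1 ×ˢ s2).biUnion (fun q =>
        {rfloor δ (q.1 + q.2), (1+δ) ^ (rExp δ (q.1 + q.2) + 1)}) with hT
      have hsubT : ∀ x ∈ s1, ∀ y ∈ s2, (roundPMF δ (x + y)).support ⊆ ↑T := by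
        intro x hx y hy
        refine (roundPMF_support hδ).trans ?_
        intro z hz
        simp only [hT, Finset.coe_biUnion, Set.mem_iUnion]
        exact ⟨(x, y), Finset.mem_product.2 ⟨hx, hy⟩, hz⟩
      rw [treePMF_node, pSum_bind _ hs1]
      have inner : ∀ x ∈ s1, pSum (p2.bind fun y => roundPMF δ (x + y)) T id =
          x + pSum p2 s2 id := by
        intro x hx
        rw [pSum_bind _ hs2]
        have h1 : ∀ y ∈ s2, pSum (roundPMF δ (x + y)) T id = x + y := by
          intro y hy
          rw [pSum_congr (hsubT x hx y hy) (roundPMF_support hδ) id,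
            round_mean hδ (by linarith [hone1 x hx, hone2 y hy])]
        calc ∑ a ∈ s2, (p2 a).toReal * pSum (roundPMF δ (x + a)) T id
            = ∑ a ∈ s2, (p2 a).toReal * (x + a) := by
              exact Finset.sum_congr rfl fun a ha => by rw [h1 a ha]
          _ = x + pSum p2 s2 id := by
              simp only [mul_add]
              rw [Finset.sum_add_distrib, ← Finset.sum_mul, weight_sum hs2, one_mul]
              simp [pSum]
      calc ∑ a ∈ s1, (p1 a).toReal * pSum (p2.bind fun y => roundPMF δ (a + y)) T id
          = ∑ a ∈ s1, (p1 a).toReal * (a + pSum p2 s2 id) := by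
            exact Finset.sum_congr rfl fun a ha => by rw [inner a ha]
        _ = pSum p1 s1 id + pSum p2 s2 id := by
            simp only [mul_add]
            rw [Finset.sum_add_distrib, ← Finset.sum_mul, weight_sum hs1, one_mul]
            simp [pSum]
        _ = (BTree.node l r).leafScores.sum := by
            rw [hmean1, hmean2, BTree.leafScores, List.sum_append]

end Helpers5
section Helpers6
variable {δ : ℝ} {p : PMF ℝ} {s : Finset ℝ}

lemma pSum_quad (hs : p.support ⊆ s) (c0 c1 : ℝ) :
    ∑ b ∈ s, (p b).toReal * (c0 + c1 * b + b ^ 2) =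
      c0 + c1 * pSum p s id + pSum p s (fun x => x ^ 2) := by
  have h1 : ∑ b ∈ s, (p b).toReal * (c1 * b) = c1 * pSum p s id := by
    rw [pSum, Finset.mul_sum]
    exact Finset.sum_congr rfl fun b _ => by simp [id]; ring
  have h2 : ∑ b ∈ s, (p b).toReal * b ^ 2 = pSum p s (fun x => x ^ 2) := rfl
  simp only [mul_add]
  rw [Finset.sum_add_distrib, Finset.sum_add_distrib, ← Finset.sum_mul, weight_sum hs,
    one_mul, h1, h2]

theorem treePMF_variance_step' (δ : ℝ) (hδ : 0 < δ) :
    (∀ y : ℝ, 1 ≤ y →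
      pmfVar (treePMF δ (BTree.leaf y)) = (y - rfloor δ y) * (rceil δ y - y)) ∧
    (∀ l r : BTree, (∀ y ∈ l.leafScores, 1 ≤ y) → (∀ y ∈ r.leafScores, 1 ≤ y) →
      pmfVar (treePMF δ (BTree.node l r)) ≤
        pmfVar (treePMF δ l) + pmfVar (treePMF δ r) +
          δ * l.leafScores.sum * r.leafScores.sum) := by
  constructor
  · intro y hy
    rw [treePMF_leaf, round_var hδ hy, gvar_eq_rceil hδ hy]
  · intro l r hl hr
    classical
    obtain ⟨s1, hs1, hpow1, hmean1⟩ := tree_invariant hδ l hl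
    obtain ⟨s2, hs2, hpow2, hmean2⟩ := tree_invariant hδ r hr
    set p1 := treePMF δ l with hp1
    set p2 := treePMF δ r with hp2
    have hone1 : ∀ x ∈ s1, (1:ℝ) ≤ x := fun x hx => by
      obtain ⟨m, rfl⟩ := hpow1 x hx; exact one_le_pow_base hδ m
    have hone2 : ∀ x ∈ s2, (1:ℝ) ≤ x := fun x hx => by
      obtain ⟨m, rfl⟩ := hpow2 x hx; exact one_le_pow_base hδ m
    set T := (s1 ×ˢ s2).biUnion (fun q =>
      {rfloor δ (q.1 + q.2), (1+δ) ^ (rExp δ (q.1 + q.2) + 1)}) with hT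
    have hsubT : ∀ x ∈ s1, ∀ y ∈ s2, (roundPMF δ (x + y)).support ⊆ ↑T := by
      intro x hx y hy
      refine (roundPMF_support hδ).trans ?_
      intro z hz
      simp only [hT, Finset.coe_biUnion, Set.mem_iUnion]
      exact ⟨(x, y), Finset.mem_product.2 ⟨hx, hy⟩, hz⟩
    have hsupport : (treePMF δ (BTree.node l r)).support ⊆ ↑T := by
      rw [treePMF_node]
      intro z hz
      rw [PMF.support_bind] at hz
      obtain ⟨x, hx, hz⟩ := Set.mem_iUnion₂.1 hz
      rw [PMF.support_bind] at hz
      obtain ⟨y, hy, hz⟩ := Set.mem_iUnion₂.1 hz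
      exact hsubT x (hs1 hx) y (hs2 hy) hz
    set μ1 := pSum p1 s1 id with hμ1
    set μ2 := pSum p2 s2 id with hμ2
    set M1 := pSum p1 s1 (fun x => x ^ 2) with hM1
    set M2 := pSum p2 s2 (fun x => x ^ 2) with hM2
    -- mean of the node
    obtain ⟨S, hS, _, hmeanS⟩ := tree_invariant hδ (BTree.node l r) (by
      intro y hy
      rw [BTree.leafScores, List.mem_append] at hy
      rcases hy with hy | hy
      · exact hl y hy
      · exact hr y hy)
    have hmeanP : pSum (treePMF δ (BTree.node l r)) T id = μ1 + μ2 := by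
      rw [pSum_congr hsupport hS id, hmeanS, BTree.leafScores, List.sum_append,
        ← hmean1, ← hmean2]
    -- second moment bound
    have hsq : pSum (treePMF δ (BTree.node l r)) T (fun x => x ^ 2) ≤
        M1 + ((2+δ) * μ2) * μ1 + M2 := by
      rw [treePMF_node, pSum_bind _ hs1]
      have inner : ∀ a ∈ s1,
          pSum (p2.bind fun y => roundPMF δ (a + y)) T (fun x => x ^ 2) ≤
            M2 + ((2+δ) * μ2) * a + a ^ 2 := by
        intro a ha
        rw [pSum_bind _ hs2]
        have step2 : ∀ b ∈ s2, pSum (roundPMF δ (a + b)) T (fun x => x ^ 2) =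
            (a + b) ^ 2 + gvar δ (a + b) := by
          intro b hb
          rw [pSum_congr (hsubT a ha b hb) (roundPMF_support hδ) _,
            round_sq hδ (by linarith [hone1 a ha, hone2 b hb])]
        calc ∑ b ∈ s2, (p2 b).toReal * pSum (roundPMF δ (a + b)) T (fun x => x ^ 2)
            = ∑ b ∈ s2, (p2 b).toReal * ((a + b) ^ 2 + gvar δ (a + b)) :=
              Finset.sum_congr rfl fun b hb => by rw [step2 b hb]
          _ ≤ ∑ b ∈ s2, (p2 b).toReal * (a ^ 2 + ((2+δ) * a) * b + b ^ 2) := by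
              refine Finset.sum_le_sum fun b hb => ?_
              refine mul_le_mul_of_nonneg_left ?_ ENNReal.toReal_nonneg
              have := gvar_le hδ (hpow1 a ha) (hpow2 b hb)
              nlinarith [this]
          _ = a ^ 2 + ((2+δ) * a) * μ2 + M2 := pSum_quad hs2 _ _
          _ = M2 + ((2+δ) * μ2) * a + a ^ 2 := by ring
      calc ∑ a ∈ s1, (p1 a).toReal * pSum (p2.bind fun y => roundPMF δ (a + y)) T
              (fun x => x ^ 2)
          ≤ ∑ a ∈ s1, (p1 a).toReal * (M2 + ((2+δ) * μ2) * a + a ^ 2) :=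
            Finset.sum_le_sum fun a ha =>
              mul_le_mul_of_nonneg_left (inner a ha) ENNReal.toReal_nonneg
        _ = M2 + ((2+δ) * μ2) * μ1 + M1 := pSum_quad hs1 _ _
        _ = M1 + ((2+δ) * μ2) * μ1 + M2 := by ring
    have hVP : pmfVar (treePMF δ (BTree.node l r)) =
        pSum (treePMF δ (BTree.node l r)) T (fun x => x ^ 2) -
          (pSum (treePMF δ (BTree.node l r)) T id) ^ 2 := pmfVar_eq hsupport
    have hV1 : pmfVar p1 = M1 - μ1 ^ 2 := pmfVar_eq hs1
    have hV2 : pmfVar p2 = M2 - μ2 ^ 2 := pmfVar_eq hs2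
    rw [hVP, hmeanP, hV1, hV2, ← hmean1, ← hmean2]
    have key : M1 + ((2+δ) * μ2) * μ1 + M2 - (μ1 + μ2) ^ 2 =
        (M1 - μ1 ^ 2) + (M2 - μ2 ^ 2) + δ * μ1 * μ2 := by ring
    linarith [hsq, key]

end Helpers6

/-- Under the rounded binary-tree process: for every leaf `l`,
`Var(X_l) = (score(l) − ⌊score(l)⌋_δ)(⌈score(l)⌉_δ − score(l))`; and for every internal
node `v` with children `v1`, `v2`,
`Var(X_v) ≤ Var(X_{v1}) + Var(X_{v2}) + δ·(Σ_{g ∈ L(v1)} score(g))·(Σ_{h ∈ L(v2)} score(h))`. -/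
theorem treePMF_variance_step (δ : ℝ) (hδ : 0 < δ) :
    (∀ y : ℝ, 1 ≤ y →
      pmfVar (treePMF δ (BTree.leaf y)) = (y - rfloor δ y) * (rceil δ y - y)) ∧
    (∀ l r : BTree, (∀ y ∈ l.leafScores, 1 ≤ y) → (∀ y ∈ r.leafScores, 1 ≤ y) →
      pmfVar (treePMF δ (BTree.node l r)) ≤
        pmfVar (treePMF δ l) + pmfVar (treePMF δ r) +
          δ * l.leafScores.sum * r.leafScores.sum) := by
  exact treePMF_variance_step' δ hδ
end

section
/- If there exist indices i, j, k with w(i,k) + w(k,j) + w(i,j) ≤ −1, then for those i, j one has C'(i,j) ≤ 3W² − W³ ≤ 0; and if w(i,k) + w(k,j) + w(i,j) ≥ 0 for all i, j, k, then C'(i,j) ≥ W² > 0 for all i, j. Consequently, the graph contains a negative-weight triangle if and only if C'(i,j) ≤ 0 for some pair (i,j). -/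
lemma prod_bound (W a b : ℤ) (ha : |a| ≤ W) (hb : |b| ≤ W) :
    -W^2 ≤ a * b ∧ a * b ≤ W^2 := by
  have h : |a * b| ≤ W^2 := by
    rw [abs_mul, sq]
    exact mul_le_mul ha hb (abs_nonneg b) ((abs_nonneg a).trans ha)
  exact ⟨neg_le_of_abs_le h, le_of_abs_le h⟩

/-- With `C(i,j) = min_k (w(i,k) + W³)(w(k,j) + W³)` and
`C'(i,j) = C(i,j) − W⁶ + W³·w(i,j) + 2W²`:
if some triangle has `w(i,k) + w(k,j) + w(i,j) ≤ −1` then for those `i, j` one has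
`C'(i,j) ≤ 3W² − W³ ≤ 0`; if all triangles have nonnegative weight then
`C'(i,j) ≥ W² > 0` for all `i, j`; consequently the graph contains a negative-weight
triangle iff `C'(i,j) ≤ 0` for some pair `(i,j)`. -/
theorem negative_triangle_iff_Cprime_nonpos (n : ℕ) (hn : 0 < n) (W : ℤ) (hW : 3 ≤ W)
    (w : Fin n → Fin n → ℤ) (hbound : ∀ i j, |w i j| ≤ W) :
    let C : Fin n → Fin n → ℤ := fun i j =>
      Finset.univ.inf' ⟨⟨0, hn⟩, Finset.mem_univ _⟩
        (fun k => (w i k + W ^ 3) * (w k j + W ^ 3))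
    let C' : Fin n → Fin n → ℤ := fun i j => C i j - W ^ 6 + W ^ 3 * w i j + 2 * W ^ 2
    (∀ i j : Fin n, (∃ k, w i k + w k j + w i j ≤ -1) →
        C' i j ≤ 3 * W ^ 2 - W ^ 3) ∧
    3 * W ^ 2 - W ^ 3 ≤ 0 ∧
    ((∀ i j k : Fin n, 0 ≤ w i k + w k j + w i j) → ∀ i j, W ^ 2 ≤ C' i j) ∧
    0 < W ^ 2 ∧
    ((∃ i j k : Fin n, w i k + w k j + w i j ≤ -1) ↔ ∃ i j, C' i j ≤ 0) := by
  intro C C'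
  have hWpos : (0:ℤ) < W := by linarith
  have h1 : ∀ i j : Fin n, (∃ k, w i k + w k j + w i j ≤ -1) →
      C' i j ≤ 3 * W ^ 2 - W ^ 3 := by
    intro i j ⟨k, hk⟩
    have hC : C i j ≤ (w i k + W ^ 3) * (w k j + W ^ 3) :=
      Finset.inf'_le _ (Finset.mem_univ k)
    have hp := prod_bound W (w i k) (w k j) (hbound i k) (hbound k j)
    have htri : W ^ 3 * (w i k + w k j + w i j) ≤ W ^ 3 * (-1) :=
      mul_le_mul_of_nonneg_left hk (by positivity)
    simp only [C']
    nlinarith [hp.2]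
  have h2 : (3:ℤ) * W ^ 2 - W ^ 3 ≤ 0 := by nlinarith
  have h3 : (∀ i j k : Fin n, 0 ≤ w i k + w k j + w i j) → ∀ i j, W ^ 2 ≤ C' i j := by
    intro hall i j
    have hC : ∀ k ∈ Finset.univ, W ^ 6 - W ^ 3 * w i j - W ^ 2 ≤
        (w i k + W ^ 3) * (w k j + W ^ 3) := by
      intro k _
      have hp := prod_bound W (w i k) (w k j) (hbound i k) (hbound k j)
      have htri : 0 ≤ W ^ 3 * (w i k + w k j + w i j) :=
        mul_nonneg (by positivity) (hall i j k)
      nlinarith [hp.1]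
    have := Finset.le_inf' ⟨⟨0, hn⟩, Finset.mem_univ _⟩ _ hC
    simp only [C', C]
    linarith [this]
  have h4 : (0:ℤ) < W ^ 2 := by positivity
  refine ⟨h1, h2, h3, h4, ?_⟩
  constructor
  · rintro ⟨i, j, k, hk⟩
    exact ⟨i, j, le_trans (h1 i j ⟨k, hk⟩) h2⟩
  · rintro ⟨i, j, hij⟩
    by_contra hno
    push_neg at hno
    have hall : ∀ i j k : Fin n, 0 ≤ w i k + w k j + w i j := by
      intro a b c
      have := hno a b c
      linarith
    have := h3 hall i j
    linarith
end
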